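/- For complex numbers a and b and a real p ≥ 1 with p ≠ 2: if p < 2 then |a+b|ᵖ + |a−b|ᵖ ≤ 2(|a|ᵖ + |b|ᵖ), if p > 2 then |a+b|ᵖ + |a−b|ᵖ ≥ 2(|a|ᵖ + |b|ᵖ), and in either case equality holds if and only if a = 0 or b = 0. -/

import Mathlib

open NNReal

namespace Stmt2Aux

lemma sq_rpow' (x : ℝ≥0) (p : ℝ) : (x*x)^(p/2) = x^p := by
  have h : x * x = x ^ (2:ℝ) := by
    rw [show (2:ℝ) = ((2:ℕ):ℝ) by norm_num, NNReal.rpow_natCast]; ring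
  rw [h, ← NNReal.rpow_mul]
  congr 1; ring

lemma mul_self_rpow (u : ℝ≥0) (hu : u ≠ 0) (r : ℝ) : u * u ^ (r-1) = u ^ r := by
  nth_rewrite 1 [← NNReal.rpow_one u]
  rw [← NNReal.rpow_add hu]
  congr 1; ring

lemma strict_sub' {r : ℝ} (hr1 : r < 1) {s t : ℝ≥0} (hs : 0 < s) (ht : 0 < t) :
    (s + t) ^ r < s ^ r + t ^ r := by
  have key : ∀ u : ℝ≥0, 0 < u → u < s + t → u * (s+t) ^ (r-1) < u ^ r := by
    intro u hu hu2
    have h1 : (s+t) ^ (r-1) < u ^ (r-1) := NNReal.rpow_lt_rpow_of_neg hu hu2 (by linarith)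
    calc u * (s+t) ^ (r-1) < u * u ^ (r-1) := mul_lt_mul_of_pos_left h1 hu
      _ = u ^ r := mul_self_rpow u hu.ne' r
  have h2 := add_lt_add (key s hs (lt_add_of_pos_right s ht)) (key t ht (lt_add_of_pos_left t hs))
  calc (s+t)^r = (s+t) * (s+t)^(r-1) := (mul_self_rpow _ (by positivity) r).symm
    _ = s * (s+t)^(r-1) + t * (s+t)^(r-1) := by ring
    _ < s ^ r + t ^ r := h2

lemma strict_super' {r : ℝ} (hr1 : 1 < r) {s t : ℝ≥0} (hs : 0 < s) (ht : 0 < t) :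
    s ^ r + t ^ r < (s + t) ^ r := by
  have key : ∀ u : ℝ≥0, 0 < u → u < s + t → u ^ r < u * (s+t) ^ (r-1) := by
    intro u hu hu2
    have h1 : u ^ (r-1) < (s+t) ^ (r-1) := NNReal.rpow_lt_rpow hu2 (by linarith)
    calc u ^ r = u * u ^ (r-1) := (mul_self_rpow u hu.ne' r).symm
      _ < u * (s+t) ^ (r-1) := mul_lt_mul_of_pos_left h1 hu
  have h2 := add_lt_add (key s hs (lt_add_of_pos_right s ht)) (key t ht (lt_add_of_pos_left t hs))
  calc s ^ r + t ^ r < s * (s+t)^(r-1) + t * (s+t)^(r-1) := h2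
    _ = (s+t) * (s+t)^(r-1) := by ring
    _ = (s+t)^r := mul_self_rpow _ (by positivity) r

/-- concave power mean: for 0 < r ≤ 1, u^r + v^r ≤ 2^(1-r) (u+v)^r -/
lemma pm_concave {r : ℝ} (hr0 : 0 < r) (hr1 : r ≤ 1) (u v : ℝ≥0) :
    u ^ r + v ^ r ≤ 2 ^ (1-r) * (u + v) ^ r := by
  have hq : (1:ℝ) ≤ 1/r := by
    rw [le_div_iff₀ hr0]; linarith
  have h := NNReal.rpow_add_le_mul_rpow_add_rpow (u^r) (v^r) hq
  have huvr : (u^r)^(1/r) = u := by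
    rw [← NNReal.rpow_mul]; field_simp; exact NNReal.rpow_one _
  have hvvr : (v^r)^(1/r) = v := by
    rw [← NNReal.rpow_mul]; field_simp; exact NNReal.rpow_one _
  rw [huvr, hvvr] at h
  -- h : (u^r + v^r) ^ (1/r) ≤ 2 ^ (1/r - 1) * (u + v)
  have h2 := NNReal.rpow_le_rpow h hr0.le
  rw [← NNReal.rpow_mul, one_div, inv_mul_cancel₀ hr0.ne', NNReal.rpow_one,
    NNReal.mul_rpow, ← NNReal.rpow_mul] at h2
  have he : (r⁻¹ - 1) * r = 1 - r := by field_simp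
  rw [he] at h2
  exact h2

/-- convex power mean: for 1 ≤ r, 2^(1-r) (u+v)^r ≤ u^r + v^r -/
lemma pm_convex {r : ℝ} (hr1 : 1 ≤ r) (u v : ℝ≥0) :
    2 ^ (1-r) * (u + v) ^ r ≤ u ^ r + v ^ r := by
  have h := NNReal.rpow_add_le_mul_rpow_add_rpow u v hr1
  calc 2 ^ (1-r) * (u + v) ^ r ≤ 2 ^ (1-r) * ((2:ℝ≥0) ^ (r-1) * (u^r + v^r)) := by
        exact mul_le_mul_of_nonneg_left h zero_le
    _ = 2 ^ ((1-r)+(r-1)) * (u^r + v^r) := by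
        rw [NNReal.rpow_add two_ne_zero]; ring
    _ = u ^ r + v ^ r := by norm_num

lemma master (p : ℝ) (hp1 : 1 ≤ p) (hp2 : p ≠ 2) (a b : ℂ) :
    (p < 2 → ‖a+b‖₊ ^ p + ‖a-b‖₊ ^ p ≤ 2 * (‖a‖₊ ^ p + ‖b‖₊ ^ p)) ∧
    (2 < p → 2 * (‖a‖₊ ^ p + ‖b‖₊ ^ p) ≤ ‖a+b‖₊ ^ p + ‖a-b‖₊ ^ p) ∧
    (‖a+b‖₊ ^ p + ‖a-b‖₊ ^ p = 2 * (‖a‖₊ ^ p + ‖b‖₊ ^ p) ↔ a = 0 ∨ b = 0) := by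
  set X := ‖a+b‖₊
  set Y := ‖a-b‖₊
  set A := ‖a‖₊
  set B := ‖b‖₊
  have hpar : X*X + Y*Y = 2*(A*A + B*B) := by
    rw [← sq, ← sq, ← sq, ← sq]; exact parallelogram_law_with_nnnorm ℂ a b
  set r := p/2 with hr
  have hr0 : 0 < r := by rw [hr]; linarith
  -- the two key chain inequalities
  have hle : p < 2 → X ^ p + Y ^ p ≤ 2 * (A*A + B*B) ^ r ∧ (A*A+B*B)^r ≤ A^p + B^p := by
    intro hplt
    have hr1 : r ≤ 1 := by rw [hr]; linarith
    constructor
    · calc X ^ p + Y ^ p = (X*X)^r + (Y*Y)^r := by rw [sq_rpow', sq_rpow']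
        _ ≤ 2 ^ (1-r) * (X*X + Y*Y) ^ r := pm_concave hr0 hr1 _ _
        _ = 2 ^ (1-r) * (2 * (A*A + B*B)) ^ r := by rw [hpar]
        _ = 2 ^ ((1-r)+r) * (A*A+B*B)^r := by
            rw [NNReal.mul_rpow, NNReal.rpow_add two_ne_zero]; ring
        _ = 2 * (A*A+B*B)^r := by norm_num
    · calc (A*A+B*B)^r ≤ (A*A)^r + (B*B)^r :=
            NNReal.rpow_add_le_add_rpow _ _ hr0.le hr1
        _ = A^p + B^p := by rw [sq_rpow', sq_rpow']
  have hge : 2 < p → A^p + B^p ≤ (A*A+B*B)^r ∧ 2 * (A*A + B*B) ^ r ≤ X ^ p + Y ^ p := by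
    intro hpgt
    have hr1 : 1 ≤ r := by rw [hr]; linarith
    constructor
    · calc A^p + B^p = (A*A)^r + (B*B)^r := by rw [sq_rpow', sq_rpow']
        _ ≤ (A*A+B*B)^r := NNReal.add_rpow_le_rpow_add _ _ hr1
    · calc 2 * (A*A+B*B)^r = 2 ^ ((1-r)+r) * (A*A+B*B)^r := by norm_num
        _ = 2 ^ (1-r) * (2 * (A*A + B*B)) ^ r := by
            rw [NNReal.mul_rpow, NNReal.rpow_add two_ne_zero]; ring
        _ = 2 ^ (1-r) * (X*X + Y*Y) ^ r := by rw [hpar]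
        _ ≤ (X*X)^r + (Y*Y)^r := pm_convex hr1 _ _
        _ = X ^ p + Y ^ p := by rw [sq_rpow', sq_rpow']
  refine ⟨fun h => le_trans (hle h).1 (mul_le_mul_right (hle h).2 2),
    fun h => le_trans (mul_le_mul_right (hge h).1 2) (hge h).2, ?_⟩
  constructor
  · -- equality → a = 0 ∨ b = 0
    intro heq
    by_contra hcon
    push_neg at hcon
    obtain ⟨ha, hb⟩ := hcon
    have hA : 0 < A*A := by
      have : A ≠ 0 := by simpa [A, nnnorm_eq_zero] using ha
      positivity
    have hB : 0 < B*B := by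
      have : B ≠ 0 := by simpa [B, nnnorm_eq_zero] using hb
      positivity
    rcases lt_or_gt_of_ne hp2 with hplt | hpgt
    · obtain ⟨c1, c2⟩ := hle hplt
      have hr1 : r < 1 := by rw [hr]; linarith
      have hstrict : (A*A+B*B)^r < (A*A)^r + (B*B)^r := strict_sub' hr1 hA hB
      rw [sq_rpow', sq_rpow'] at hstrict
      have : X ^ p + Y ^ p < 2 * (A^p + B^p) := by
        calc X ^ p + Y ^ p ≤ 2 * (A*A+B*B)^r := c1
          _ < 2 * (A^p + B^p) := by
              have h2 : (0:ℝ≥0) < 2 := by norm_num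
              exact mul_lt_mul_of_pos_left hstrict h2
      exact absurd heq this.ne
    · obtain ⟨c1, c2⟩ := hge hpgt
      have hr1 : 1 < r := by rw [hr]; linarith
      have hstrict : (A*A)^r + (B*B)^r < (A*A+B*B)^r := strict_super' hr1 hA hB
      rw [sq_rpow', sq_rpow'] at hstrict
      have : 2 * (A^p + B^p) < X ^ p + Y ^ p := by
        calc 2 * (A^p + B^p) < 2 * (A*A+B*B)^r := by
              have h2 : (0:ℝ≥0) < 2 := by norm_num
              exact mul_lt_mul_of_pos_left hstrict h2
          _ ≤ X ^ p + Y ^ p := c2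
      exact absurd heq this.ne'
  · rintro (rfl | rfl)
    · simp only [X, Y, A, B, zero_add, zero_sub, nnnorm_neg, nnnorm_zero]
      rw [NNReal.zero_rpow (by positivity : p ≠ 0)]
      ring
    · simp only [X, Y, A, B, add_zero, sub_zero, nnnorm_zero]
      rw [NNReal.zero_rpow (by positivity : p ≠ 0)]
      ring

end Stmt2Aux

/-- the scalar inequality underlying Lamperti's theorem. -/
theorem stmt_2 (p : ℝ) (hp1 : 1 ≤ p) (hp2 : p ≠ 2) (a b : ℂ) :
    (p < 2 →
      ‖a + b‖ ^ p + ‖a - b‖ ^ p ≤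
        2 * (‖a‖ ^ p + ‖b‖ ^ p)) ∧
    (2 < p →
      2 * (‖a‖ ^ p + ‖b‖ ^ p) ≤
        ‖a + b‖ ^ p + ‖a - b‖ ^ p) ∧
    (‖a + b‖ ^ p + ‖a - b‖ ^ p =
        2 * (‖a‖ ^ p + ‖b‖ ^ p) ↔ a = 0 ∨ b = 0) := by
  obtain ⟨h1, h2, h3⟩ := Stmt2Aux.master p hp1 hp2 a b
  have key : ∀ z : ℂ, ‖z‖ ^ p = ((‖z‖₊ ^ p : ℝ≥0) : ℝ) := fun z => by
    rw [NNReal.coe_rpow, coe_nnnorm]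
  simp only [key]
  refine ⟨fun h => ?_, fun h => ?_, ?_⟩
  · have := h1 h
    exact_mod_cast this
  · have := h2 h
    exact_mod_cast this
  · rw [← h3]
    constructor
    · intro h; exact_mod_cast h
    · intro h; exact_mod_cast h
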